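/- If there exists a complete finitely join-irreducible lattice which is transversally bounded but not uniformly transversally bounded, then there exists a p-point ultrafilter on omega. Equivalently, if no p-point ultrafilter on omega exists, then every transversally bounded complete finitely join-irreducible lattice is uniformly transversally bounded. -/

import Mathlib

universe u v w

/-- An ultrafilter `U` on `ℕ` is a *p-point* if it is nonprincipal (contains no finite set)
and, whenever `ℕ` is partitioned into pairwise disjoint sets `N k` none of which belongs
to `U`, there is a set `Y ∈ U` such that `Y ∩ N k` is finite for every `k`. -/
def IsPPoint (U : Ultrafilter ℕ) : Prop :=
  (∀ Y : Set ℕ, Y.Finite → Y ∉ U) ∧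
    ∀ N : ℕ → Set ℕ, Pairwise (fun k l => Disjoint (N k) (N l)) →
      (⋃ k, N k) = Set.univ → (∀ k, N k ∉ U) →
        ∃ Y ∈ U, ∀ k, (Y ∩ N k).Finite

/-- A complete lattice `L` is *transversally bounded* if for every family `(X i)_{i : I}`
of nonempty subsets of `L`, all of whose transversals are bounded (i.e. have join strictly
below the top element), the join of `X i` is strictly below the top element for all but
finitely many `i`. -/
def LatticeTB (L : Type u) [CompleteLattice L] : Prop :=
  ∀ (I : Type v) (X : I → Set L), (∀ i, (X i).Nonempty) →
    (∀ x : I → L, (∀ i, x i ∈ X i) → (⨆ i, x i) < ⊤) →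
      {i : I | ¬ sSup (X i) < ⊤}.Finite

/-- A complete lattice `L` is *uniformly transversally bounded* if for every family
`(X i)_{i : I}` of nonempty subsets of `L`, all of whose transversals are bounded, there
is a cofinite subset `J` of `I` such that the join of `⋃ i ∈ J, X i` is strictly below
the top element. -/
def LatticeUTB (L : Type u) [CompleteLattice L] : Prop :=
  ∀ (I : Type v) (X : I → Set L), (∀ i, (X i).Nonempty) →
    (∀ x : I → L, (∀ i, x i ∈ X i) → (⨆ i, x i) < ⊤) →
      ∃ J : Set I, Jᶜ.Finite ∧ sSup (⋃ i ∈ J, X i) < ⊤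

section PPointAux

variable {L : Type u} [CompleteLattice L]

def ppJoin {ι : Type*} (a : ι → L) (A : Set ι) : L := ⨆ i ∈ A, a i

lemma ppJoin_mono {ι : Type*} (a : ι → L) {A B : Set ι} (h : A ⊆ B) :
    ppJoin a A ≤ ppJoin a B := biSup_mono h

lemma ppJoin_union {ι : Type*} (a : ι → L) (A B : Set ι) :
    ppJoin a (A ∪ B) = ppJoin a A ⊔ ppJoin a B := iSup_union

lemma ppJoin_iUnion {ι κ : Type*} (a : ι → L) (T : κ → Set ι) :
    ppJoin a (⋃ k, T k) = ⨆ k, ppJoin a (T k) := iSup_iUnion T a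

lemma ppJoin_singleton {ι : Type*} (a : ι → L) (i : ι) : ppJoin a {i} = a i := iSup_singleton

lemma ppJoin_empty {ι : Type*} (a : ι → L) : ppJoin a (∅ : Set ι) = ⊥ := iSup_emptyset

lemma le_ppJoin {ι : Type*} (a : ι → L) {A : Set ι} {i : ι} (hi : i ∈ A) :
    a i ≤ ppJoin a A := le_iSup₂ (f := fun i (_ : i ∈ A) => a i) i hi

lemma ppJoin_le {ι : Type*} {a : ι → L} {A : Set ι} {c : L} (h : ∀ i ∈ A, a i ≤ c) :
    ppJoin a A ≤ c := iSup₂_le h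

lemma ppJoin_univ {ι : Type*} (a : ι → L) : ppJoin a Set.univ = ⨆ i, a i := iSup_univ

lemma ppJoin_range {ι κ : Type*} (a : ι → L) (f : κ → ι) :
    ppJoin a (Set.range f) = ⨆ k, a (f k) := iSup_range

lemma ppJoin_image {ι κ : Type*} (a : ι → L) (f : κ → ι) (S : Set κ) :
    ppJoin a (f '' S) = ppJoin (fun k => a (f k)) S := iSup_image

lemma ppJoin_eq_top_of_not_lt {ι : Type*} {a : ι → L} {A : Set ι}
    (h : ¬ ppJoin a A < ⊤) : ppJoin a A = ⊤ := by
  by_contra h'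
  exact h (lt_top_iff_ne_top.mpr h')

lemma ppJoin_lt_top (hfji : ∀ a b : L, a < ⊤ → b < ⊤ → a ⊔ b < ⊤)
    (hbot : (⊥ : L) < ⊤) {ι : Type*} {A : Set ι} (hA : A.Finite) {a : ι → L}
    (h : ∀ i ∈ A, a i < ⊤) : ppJoin a A < ⊤ := by
  refine Set.Finite.induction_on
    (motive := fun s _ => (∀ i ∈ s, a i < ⊤) → ppJoin a s < ⊤) A hA ?_ ?_ h
  · intro _
    rw [ppJoin_empty]
    exact hbot
  · intro b s _ _ ih h'
    have : ppJoin a (insert b s) = a b ⊔ ppJoin a s := iSup_insert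
    rw [this]
    exact hfji _ _ (h' b (Set.mem_insert _ _)) (ih fun i hi => h' i (Set.mem_insert_of_mem _ hi))

/-- The `ℕ`-level endgame: from a sequence `b : ℕ → L` whose elements are `< ⊤`, whose
total join is `⊤`, and such that no set and its complement both have join `⊤`, we produce
a p-point, using transversal boundedness. -/
lemma ppoint_endgame (hfji : ∀ a b : L, a < ⊤ → b < ⊤ → a ⊔ b < ⊤)
    (htb : LatticeTB.{u, v} L) (hbot : (⊥ : L) < ⊤) (b : ℕ → L)
    (hblt : ∀ n, b n < ⊤) (huniv : ppJoin b Set.univ = ⊤)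
    (hnb : ∀ S : Set ℕ, ppJoin b S = ⊤ → ppJoin b Sᶜ = ⊤ → False) :
    ∃ U : Ultrafilter ℕ, IsPPoint U := by
  classical
  have hτfin : ∀ {S : Set ℕ}, S.Finite → ppJoin b S < ⊤ := fun hS =>
    ppJoin_lt_top hfji hbot hS fun n _ => hblt n
  have hOne : ∀ S : Set ℕ, ppJoin b S = ⊤ ∨ ppJoin b Sᶜ = ⊤ := by
    intro S
    by_contra h
    push_neg at h
    have h1 : ppJoin b S < ⊤ := lt_top_iff_ne_top.mpr h.1
    have h2 : ppJoin b Sᶜ < ⊤ := lt_top_iff_ne_top.mpr h.2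
    have h3 := hfji _ _ h1 h2
    rw [← ppJoin_union, Set.union_compl_self, huniv] at h3
    exact lt_irrefl _ h3
  let Fil : Filter ℕ :=
    { sets := {S | ppJoin b S = ⊤}
      univ_sets := huniv
      sets_of_superset := fun {S S'} hS hSS' => top_unique (hS ▸ ppJoin_mono b hSS')
      inter_sets := fun {S S'} hS hS' => by
        rcases hOne (S ∩ S') with h | h
        · exact h
        · exfalso
          have h1 : ppJoin b Sᶜ < ⊤ := lt_top_iff_ne_top.mpr fun hc => hnb S hS hc
          have h2 : ppJoin b S'ᶜ < ⊤ := lt_top_iff_ne_top.mpr fun hc => hnb S' hS' hc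
          have h3 : ppJoin b ((S ∩ S')ᶜ) < ⊤ := by
            rw [Set.compl_inter, ppJoin_union]
            exact hfji _ _ h1 h2
          exact h3.ne h }
  have hmemFil : ∀ S : Set ℕ, S ∈ Fil ↔ ppJoin b S = ⊤ := fun S => Iff.rfl
  let U : Ultrafilter ℕ := Ultrafilter.ofComplNotMemIff Fil (by
    intro S
    constructor
    · intro h
      rcases hOne S with h' | h'
      · exact h'
      · exact absurd h' h
    · intro hS hc
      exact hnb S hS hc)
  have hmemU : ∀ S : Set ℕ, S ∈ U ↔ ppJoin b S = ⊤ := fun S => Iff.rfl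
  refine ⟨U, ?_, ?_⟩
  · intro Y hY hmem
    exact (hτfin hY).ne ((hmemU Y).mp hmem)
  · intro N hdis hcover hnotmem
    by_contra hA
    push_neg at hA
    have hNlt : ∀ m, ppJoin b (N m) < ⊤ := fun m =>
      lt_top_iff_ne_top.mpr fun h => hnotmem m ((hmemU _).mpr h)
    have hcon : ∀ E : Set ℕ, (∀ m, (E ∩ N m).Finite) → ppJoin b E < ⊤ := by
      intro E hE
      by_contra h
      obtain ⟨k, hk⟩ := hA E ((hmemU E).mpr (ppJoin_eq_top_of_not_lt h))
      exact hk (hE k)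
    have htail : ∀ k : ℕ, ppJoin b {n | ∃ m, k ≤ m ∧ n ∈ N m} = ⊤ := by
      intro k
      induction k with
      | zero =>
        have he : {n | ∃ m, 0 ≤ m ∧ n ∈ N m} = Set.univ := by
          apply Set.eq_univ_of_forall
          intro n
          have hn : n ∈ ⋃ m, N m := hcover ▸ Set.mem_univ n
          obtain ⟨m, hm⟩ := Set.mem_iUnion.mp hn
          exact ⟨m, Nat.zero_le m, hm⟩
        rw [he, huniv]
      | succ k ih =>
        have hsub : {n | ∃ m, k ≤ m ∧ n ∈ N m} ⊆ {n | ∃ m, k + 1 ≤ m ∧ n ∈ N m} ∪ N k := by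
          rintro n ⟨m, hkm, hnm⟩
          rcases eq_or_lt_of_le hkm with rfl | h
          · exact Or.inr hnm
          · exact Or.inl ⟨m, h, hnm⟩
        by_contra hne'
        have h1 : ppJoin b {n | ∃ m, k + 1 ≤ m ∧ n ∈ N m} < ⊤ := lt_top_iff_ne_top.mpr hne'
        have h2 : (⊤ : L) ≤ ppJoin b {n | ∃ m, k + 1 ≤ m ∧ n ∈ N m} ⊔ ppJoin b (N k) := by
          calc (⊤ : L) = ppJoin b {n | ∃ m, k ≤ m ∧ n ∈ N m} := ih.symm
            _ ≤ ppJoin b ({n | ∃ m, k + 1 ≤ m ∧ n ∈ N m} ∪ N k) := ppJoin_mono b hsub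
            _ = _ := ppJoin_union b _ _
        exact absurd (lt_of_le_of_lt h2 (hfji _ _ h1 (hNlt k))) (lt_irrefl ⊤)
    -- the TB family of finite partial joins along tails
    set W : ULift.{v} ℕ → Set L := fun k =>
      {c | ∃ F : Finset ℕ, (↑F : Set ℕ) ⊆ {n | ∃ m, k.down ≤ m ∧ n ∈ N m} ∧
        c = ppJoin b (↑F : Set ℕ)} with hW
    have hWne : ∀ k, (W k).Nonempty := fun k =>
      ⟨ppJoin b ((∅ : Finset ℕ) : Set ℕ), ⟨∅, by simp, rfl⟩⟩
    have hWtrans : ∀ v : ULift.{v} ℕ → L, (∀ k, v k ∈ W k) → (⨆ k, v k) < ⊤ := by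
      intro v hv
      choose F hF hveq using hv
      have hEfin : ∀ m, ((⋃ k, ((F k : Set ℕ))) ∩ N m).Finite := by
        intro m
        have hsub : (⋃ k, ((F k : Set ℕ))) ∩ N m ⊆
            ⋃ j ∈ Finset.range (m + 1), ((F (ULift.up j) : Set ℕ)) := by
          rintro n ⟨hnE, hnN⟩
          obtain ⟨k, hk⟩ := Set.mem_iUnion.mp hnE
          obtain ⟨m', hm', hnm'⟩ := hF k hk
          have hmm : m' = m := by
            by_contra hne'
            exact Set.disjoint_left.mp (hdis hne') hnm' hnN
          subst hmm
          refine Set.mem_biUnion (Finset.mem_range.mpr (Nat.lt_succ_of_le hm')) ?_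
          cases k
          exact hk
        exact Set.Finite.subset
          ((Finset.range (m + 1)).finite_toSet.biUnion fun j _ => (F (ULift.up j)).finite_toSet)
          hsub
      have hsup : (⨆ k, v k) = ppJoin b (⋃ k, ((F k : Set ℕ))) := by
        rw [ppJoin_iUnion]
        exact iSup_congr fun k => hveq k
      rw [hsup]
      exact hcon _ hEfin
    have hbad := htb (ULift.{v} ℕ) W hWne hWtrans
    have hWsup : ∀ k : ULift.{v} ℕ, sSup (W k) = ⊤ := by
      intro k
      refine le_antisymm le_top ?_
      rw [← htail k.down]
      refine ppJoin_le fun n hn => le_sSup ?_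
      refine ⟨{n}, by simpa using hn, ?_⟩
      simp [ppJoin_singleton]
    have huniv' : {k : ULift.{v} ℕ | ¬ sSup (W k) < ⊤} = Set.univ := by
      apply Set.eq_univ_of_forall
      intro k
      simp only [Set.mem_setOf_eq, hWsup k]
      exact lt_irrefl ⊤
    rw [huniv'] at hbad
    exact Set.infinite_univ hbad

end PPointAux


/-- If there exists a complete finitely join-irreducible lattice which is transversally
bounded but not uniformly transversally bounded, then there exists a p-point ultrafilter
on `ℕ`.  (Equivalently: if there is no p-point ultrafilter on `ℕ`, then every
transversally bounded complete finitely join-irreducible lattice is uniformly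
transversally bounded.) -/
theorem exists_pPoint_of_exists_TB_not_UTB_lattice
    (L : Type u) [CompleteLattice L]
    (hfji : ∀ a b : L, a < ⊤ → b < ⊤ → a ⊔ b < ⊤)
    (htb : LatticeTB.{u, v} L) (hnutb : ¬ LatticeUTB.{u, v} L) :
    ∃ U : Ultrafilter ℕ, IsPPoint U := by
  classical
  simp only [LatticeUTB] at hnutb
  push_neg at hnutb
  obtain ⟨I, X, hne, htrans, hJ⟩ := hnutb
  set a : I → L := fun i => sSup (X i) with ha_def
  have hbot : (⊥ : L) < ⊤ :=
    lt_of_le_of_lt bot_le (htrans (fun i => (hne i).some) fun i => (hne i).some_mem)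
  -- sSup of a union of the X's equals the ppJoin of the a's
  have hsupU : ∀ A : Set I, sSup (⋃ i ∈ A, X i) = ppJoin a A := by
    intro A
    apply le_antisymm
    · apply sSup_le
      rintro c hc
      simp only [Set.mem_iUnion] at hc
      obtain ⟨i, hi, hcX⟩ := hc
      exact le_trans (le_sSup hcX) (le_ppJoin a hi)
    · exact ppJoin_le fun i hi => sSup_le fun c hc => le_sSup (Set.mem_biUnion hi hc)
  set I₀ : Set I := {i : I | a i < ⊤} with hI0_def
  have hI0c : I₀ᶜ.Finite := by
    have h := htb I X hne htrans
    convert h using 1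
    rfl
  have hcof : ∀ A : Set I, A ⊆ I₀ → (I₀ \ A).Finite → ppJoin a A = ⊤ := by
    intro A hA hfin
    have hc : Aᶜ.Finite := by
      apply (hI0c.union hfin).subset
      intro i hi
      by_cases h : i ∈ I₀
      · exact Or.inr ⟨h, hi⟩
      · exact Or.inl h
    have h := hJ A hc
    rw [hsupU] at h
    exact ppJoin_eq_top_of_not_lt h
  have hI0top : ppJoin a I₀ = ⊤ := hcof I₀ subset_rfl (by simp)
  -- (P): no countable pairwise-disjoint family of subsets all of whose joins are ⊤
  have hP : ∀ N : ℕ → Set I, (∀ k l, k ≠ l → ∀ i, i ∈ N k → i ∈ N l → False) →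
      ¬ ∀ k, ppJoin a (N k) = ⊤ := by
    intro N hdisj hall
    set V : ULift.{v} ℕ → Set L := fun k =>
      {c | ∃ F : Finset I, (↑F : Set I) ⊆ N k.down ∧ ∃ x : I → L, (∀ i, x i ∈ X i) ∧
        c = ⨆ i ∈ (F : Set I), x i} with hV
    have hVne : ∀ k, (V k).Nonempty := fun k =>
      ⟨⊥, ⟨∅, by simp, fun i => (hne i).some, fun i => (hne i).some_mem, by simp⟩⟩
    have hVtrans : ∀ v : ULift.{v} ℕ → L, (∀ k, v k ∈ V k) → (⨆ k, v k) < ⊤ := by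
      intro v hv
      choose F hF x hx hvx using hv
      set y : I → L := fun i => if h : ∃ k, i ∈ F k then x h.choose i else (hne i).some
        with hy_def
      have hy : ∀ i, y i ∈ X i := by
        intro i
        rw [hy_def]
        dsimp only
        split
        · exact hx _ i
        · exact (hne i).some_mem
      refine lt_of_le_of_lt ?_ (htrans y hy)
      refine iSup_le fun k => ?_
      rw [hvx k]
      refine iSup₂_le fun i hi => ?_
      have hex : ∃ k', i ∈ F k' := ⟨k, hi⟩
      have hk' : hex.choose = k := by
        by_contra hne'
        exact hdisj hex.choose.down k.down (fun h => hne' (ULift.down_injective h)) i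
          (hF _ hex.choose_spec) (hF k hi)
      have hyx : y i = x k i := by
        rw [hy_def]
        dsimp only
        rw [dif_pos hex, hk']
      rw [← hyx]
      exact le_iSup y i
    have hbad := htb (ULift.{v} ℕ) V hVne hVtrans
    have hVsup : ∀ k : ULift.{v} ℕ, sSup (V k) = ⊤ := by
      intro k
      refine le_antisymm le_top ?_
      rw [← hall k.down]
      refine ppJoin_le fun i hi => ?_
      refine sSup_le fun c hc => le_sSup ?_
      refine ⟨{i}, by simpa using hi, Function.update (fun j => (hne j).some) i c, ?_, ?_⟩
      · intro j
        rcases eq_or_ne j i with rfl | hji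
        · simpa using hc
        · rw [Function.update_of_ne hji]
          exact (hne j).some_mem
      · simp
    have huniv' : {k : ULift.{v} ℕ | ¬ sSup (V k) < ⊤} = Set.univ := by
      apply Set.eq_univ_of_forall
      intro k
      simp [hVsup k]
    rw [huniv'] at hbad
    exact Set.infinite_univ hbad
  -- Claim A: an "atomic" set S on which the join-⊤ sets form an ultrafilter-like family
  obtain ⟨S, hSI0, hStop, hSult⟩ : ∃ S : Set I, S ⊆ I₀ ∧ ppJoin a S = ⊤ ∧
      ∀ A : Set I, A ⊆ S → ppJoin a A = ⊤ → ppJoin a (S \ A) = ⊤ → False := by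
    by_contra hcl
    have hstep : ∀ S : Set I, S ⊆ I₀ → ppJoin a S = ⊤ →
        ∃ A, A ⊆ S ∧ ppJoin a A = ⊤ ∧ ppJoin a (S \ A) = ⊤ := by
      intro S h1 h2
      by_contra h3
      push_neg at h3
      exact hcl ⟨S, h1, h2, fun A hA hA1 hA2 => h3 A hA hA1 hA2⟩
    let step : {A : Set I // A ⊆ I₀ ∧ ppJoin a A = ⊤} →
        {A : Set I // A ⊆ I₀ ∧ ppJoin a A = ⊤} := fun p =>
      ⟨p.1 \ (hstep p.1 p.2.1 p.2.2).choose, fun i hi => p.2.1 hi.1,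
        (hstep p.1 p.2.1 p.2.2).choose_spec.2.2⟩
    let R : ℕ → {A : Set I // A ⊆ I₀ ∧ ppJoin a A = ⊤} :=
      fun k => step^[k] ⟨I₀, subset_rfl, hI0top⟩
    let N : ℕ → Set I := fun k => (hstep (R k).1 (R k).2.1 (R k).2.2).choose
    have hNsub : ∀ k, N k ⊆ (R k).1 := fun k =>
      (hstep (R k).1 (R k).2.1 (R k).2.2).choose_spec.1
    have hNtop : ∀ k, ppJoin a (N k) = ⊤ := fun k =>
      (hstep (R k).1 (R k).2.1 (R k).2.2).choose_spec.2.1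
    have hRsucc : ∀ k, (R (k + 1)).1 = (R k).1 \ N k := by
      intro k
      show (step^[k + 1] _).1 = _
      rw [Function.iterate_succ_apply']
    have hRstep : ∀ k, (R (k + 1)).1 ⊆ (R k).1 := fun k => by
      rw [hRsucc k]
      exact Set.diff_subset
    have hRmono : ∀ k l, k ≤ l → (R l).1 ⊆ (R k).1 := by
      intro k l h
      induction l, h using Nat.le_induction with
      | base => exact subset_rfl
      | succ l hl ih => exact fun i hi => ih (hRstep l hi)
    have hdisj : ∀ k l, k < l → ∀ i, i ∈ N k → i ∈ N l → False := by
      intro k l hkl i hik hil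
      have h : i ∈ (R (k + 1)).1 := hRmono (k + 1) l hkl (hNsub l hil)
      rw [hRsucc k] at h
      exact h.2 hik
    refine hP N ?_ hNtop
    intro k l hne' i hik hil
    rcases Nat.lt_or_ge k l with h | h
    · exact hdisj k l h i hik hil
    · exact hdisj l k (lt_of_le_of_ne h (Ne.symm hne')) i hil hik
  -- a countable subset of S with join ⊤
  have hcnt : ∃ T : Set I, T ⊆ S ∧ T.Countable ∧ ppJoin a T = ⊤ := by
    by_contra hc
    push_neg at hc
    have hc' : ∀ T : Set I, T ⊆ S → T.Countable → ppJoin a T < ⊤ := fun T h1 h2 =>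
      lt_top_iff_ne_top.mpr (hc T h1 h2)
    set V : ULift.{v} ℕ → Set L := fun _ =>
      {c | ∃ T : Set I, T ⊆ S ∧ T.Countable ∧ c = ppJoin a T} with hV
    have hVne : ∀ k, (V k).Nonempty := fun k =>
      ⟨ppJoin a ∅, ∅, Set.empty_subset _, Set.countable_empty, rfl⟩
    have hVtrans : ∀ v : ULift.{v} ℕ → L, (∀ k, v k ∈ V k) → (⨆ k, v k) < ⊤ := by
      intro v hv
      choose T hT1 hT2 hveq using hv
      have h : (⨆ k, v k) = ppJoin a (⋃ k, T k) := by
        rw [ppJoin_iUnion]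
        exact iSup_congr fun k => hveq k
      rw [h]
      exact hc' _ (Set.iUnion_subset hT1) (Set.countable_iUnion hT2)
    have hbad := htb (ULift.{v} ℕ) V hVne hVtrans
    have hVsup : ∀ k : ULift.{v} ℕ, sSup (V k) = ⊤ := by
      intro k
      refine le_antisymm le_top ?_
      rw [← hStop]
      refine ppJoin_le fun i hi => le_sSup ?_
      exact ⟨{i}, Set.singleton_subset_iff.mpr hi, Set.countable_singleton i,
        (ppJoin_singleton a i).symm⟩
    have huniv' : {k : ULift.{v} ℕ | ¬ sSup (V k) < ⊤} = Set.univ := by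
      apply Set.eq_univ_of_forall
      intro k
      simp [hVsup k]
    rw [huniv'] at hbad
    exact Set.infinite_univ hbad
  obtain ⟨T, hTS, hTc, hTtop⟩ := hcnt
  have hTinf : T.Infinite := by
    by_contra hfin
    rw [Set.not_infinite] at hfin
    exact (ppJoin_lt_top hfji hbot hfin (a := a) fun i hi => hSI0 (hTS hi)).ne hTtop
  haveI : Countable ↥T := hTc.to_subtype
  haveI : Infinite ↥T := hTinf.to_subtype
  obtain ⟨d⟩ := nonempty_denumerable ↥T
  let e : ℕ ≃ ↥T := (Denumerable.eqv ↥T).symm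
  let f : ℕ → I := fun n => (e n : I)
  have hfinj : Function.Injective f := fun m n h =>
    e.injective (Subtype.ext h)
  have hfT : ∀ n, f n ∈ T := fun n => (e n).2
  have hrange : Set.range f = T := by
    ext i
    constructor
    · rintro ⟨n, rfl⟩
      exact hfT n
    · intro hi
      exact ⟨e.symm ⟨i, hi⟩, by simp [f]⟩
  let b : ℕ → L := fun n => a (f n)
  have hblt : ∀ n, b n < ⊤ := fun n => hSI0 (hTS (hfT n))
  have hbim : ∀ Sn : Set ℕ, ppJoin b Sn = ppJoin a (f '' Sn) := fun Sn =>
    (ppJoin_image a f Sn).symm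
  have huniv : ppJoin b Set.univ = ⊤ := by
    rw [hbim, Set.image_univ, hrange, hTtop]
  have hnb : ∀ Sn : Set ℕ, ppJoin b Sn = ⊤ → ppJoin b Snᶜ = ⊤ → False := by
    intro Sn h1 h2
    rw [hbim] at h1 h2
    refine hSult (f '' Sn) ?_ h1 ?_
    · exact fun i hi => hTS (by obtain ⟨n, _, rfl⟩ := hi; exact hfT n)
    · refine le_antisymm le_top ?_
      rw [← h2]
      refine ppJoin_mono a ?_
      rintro i ⟨n, hn, rfl⟩
      refine ⟨hTS (hfT n), ?_⟩
      rintro ⟨m, hm, hfm⟩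
      exact hn (hfinj hfm ▸ hm)
  exact ppoint_endgame hfji htb hbot b hblt huniv hnb
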